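/- arXiv:1306.3853 — 4 statements merged into one kernel-verified Lean document; each statement's English description precedes it below -/
import Mathlib

section
/- Let L ⊋ K be a proper field extension with [L:K] < ∞. Then L is not the union of finitely many fields M with K ⊆ M ⊊ L. -/
/-- If `L ⊋ K` is a proper field extension with `[L:K] < ∞`, then `L` is not the union of
finitely many intermediate fields `M` with `K ⊆ M ⊊ L`. -/
theorem not_union_of_proper_intermediateFields (K L : Type*) [Field K] [Field L]
    [Algebra K L] [FiniteDimensional K L]
    (h : ¬ Function.Surjective (algebraMap K L)) :
    ¬ ∃ s : Finset (IntermediateField K L),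
        (∀ M ∈ s, M ≠ ⊤) ∧ ∀ x : L, ∃ M ∈ s, x ∈ M := by
  rintro ⟨s, hne, hcover⟩
  cases finite_or_infinite K
  · -- K finite, so L is a finite field; take a generator of Lˣ
    have : Finite L := Module.finite_of_finite K
    obtain ⟨g, hg⟩ := IsCyclic.exists_generator (α := Lˣ)
    obtain ⟨M, hMs, hMx⟩ := hcover (g : L)
    apply hne M hMs
    rw [eq_top_iff]
    intro y _
    rcases eq_or_ne y 0 with rfl | hy
    · exact zero_mem M
    · obtain ⟨n, hn⟩ := hg (Units.mk0 y hy)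
      have : ((g ^ n : Lˣ) : L) = y := by rw [show g ^ n = Units.mk0 y hy from hn]; rfl
      rw [← this, Units.val_zpow_eq_zpow_val]
      exact zpow_mem hMx n
  · classical
    -- K infinite: a vector space over an infinite field is not a finite union
    -- of proper subspaces
    set t : Finset (Subspace K L) := s.image (fun M : IntermediateField K L => Subalgebra.toSubmodule M.toSubalgebra)
    have htop : ⊤ ∉ t := by
      intro htop
      obtain ⟨M, hM, hMt⟩ := Finset.mem_image.mp htop
      apply hne M hM
      apply IntermediateField.toSubalgebra_injective
      apply Subalgebra.toSubmodule_injective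
      simpa using hMt
    apply Subspace.biUnion_ne_univ_of_top_notMem htop
    ext x
    simp only [Set.mem_iUnion, Set.mem_univ, iff_true]
    obtain ⟨M, hMs, hMx⟩ := hcover x
    exact ⟨Subalgebra.toSubmodule M.toSubalgebra, Finset.mem_image_of_mem _ hMs, hMx⟩
end

section
/- Let L ⊇ K be a field extension with [L:K] < ∞ and G = Aut(L,K). Then there exists z ∈ L whose stabilizer in G is trivial, i.e., the only σ ∈ G with σ(z) = z is the identity. -/
/-- For a finite-degree field extension `L/K` with `G = Aut(L,K)`, there exists `z ∈ L`
whose stabilizer in `G` is trivial: the only `σ ∈ G` with `σ z = z` is the identity. -/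
theorem exists_trivial_stabilizer (K L : Type*) [Field K] [Field L]
    [Algebra K L] [FiniteDimensional K L] :
    ∃ z : L, ∀ σ : L ≃ₐ[K] L, σ z = z → σ = AlgEquiv.refl := by
  let G := L ≃ₐ[K] L
  let F := FixedPoints.subfield G L
  obtain ⟨z, hz⟩ := Field.exists_primitive_element F L
  refine ⟨z, fun σ hσ => ?_⟩
  have key : ∀ x : L, σ x = x := by
    intro x
    have hx : x ∈ (⊤ : IntermediateField (↥F) L) := trivial
    rw [← hz] at hx
    induction hx using IntermediateField.adjoin_induction with
    | mem y hy =>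
      rw [Set.mem_singleton_iff] at hy
      subst hy; exact hσ
    | algebraMap y => exact y.2 σ
    | add a b _ _ ha hb => simp [ha, hb]
    | inv a _ ha => simp [ha]
    | mul a b _ _ ha hb => simp [ha, hb]
  ext x
  exact key x
end

section
/- Let L ⊇ K be a field extension with [L:K] < ∞ and G = Aut(L,K). If |G| = [L:K], then there exists z ∈ L such that L = K(z), the minimal polynomial μ_z of z over K has only simple roots in L, and L is a splitting field of μ_z over K; moreover μ_z = ∏_{σ ∈ G} (X − σ(z)). -/
open Polynomial

/-- Let `L/K` be a finite-degree field extension with `G = Aut(L,K)`. If `|G| = [L:K]`,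
then there exists `z ∈ L` with `L = K(z)`, the minimal polynomial `μ_z` of `z` over `K`
has only simple roots in `L`, and `L` is a splitting field of `μ_z` over `K`; moreover
`μ_z = ∏_{σ ∈ G} (X - σ z)` (as a polynomial over `L`). -/
theorem exists_primitive_element_of_card_aut_eq_finrank (K L : Type*) [Field K] [Field L]
    [Algebra K L] [FiniteDimensional K L]
    (h : Nat.card (L ≃ₐ[K] L) = Module.finrank K L) :
    ∃ z : L, IntermediateField.adjoin K {z} = ⊤ ∧
      ((minpoly K z).map (algebraMap K L)).roots.Nodup ∧
      Polynomial.Splits ((minpoly K z).map (algebraMap K L)) ∧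
      Algebra.adjoin K ((minpoly K z).rootSet L) = ⊤ ∧
      (minpoly K z).map (algebraMap K L) =
        ∏ σ : L ≃ₐ[K] L, (X - C (σ z)) := by
  classical
  have hgal : IsGalois K L := by
    apply IsGalois.of_card_aut_eq_finrank
    exact h
  obtain ⟨z, hz⟩ := Field.exists_primitive_element K L
  have hint : IsIntegral K z := IsIntegral.of_finite K z
  have hsep : (minpoly K z).Separable := Algebra.IsSeparable.isSeparable K z
  have hsplits : Splits ((minpoly K z).map (algebraMap K L)) :=
    (inferInstance : Normal K L).splits z
  have hnodup : ((minpoly K z).map (algebraMap K L)).roots.Nodup :=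
    nodup_roots (hsep.map)
  refine ⟨z, hz, hnodup, hsplits, ?_, ?_⟩
  · have hz' : Algebra.adjoin K ({z} : Set L) = ⊤ := by
      rw [← IntermediateField.adjoin_simple_toSubalgebra_of_isAlgebraic hint.isAlgebraic, hz]
      exact IntermediateField.top_toSubalgebra
    have hsub : ({z} : Set L) ⊆ (minpoly K z).rootSet L := by
      rw [Set.singleton_subset_iff, mem_rootSet]
      exact ⟨minpoly.ne_zero hint, minpoly.aeval K z⟩
    have := Algebra.adjoin_mono (R := K) hsub
    rw [hz'] at this
    exact top_le_iff.mp this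
  · have hinj : Function.Injective fun σ : L ≃ₐ[K] L => σ z := by
      intro σ τ hστ
      ext x
      have hx : x ∈ IntermediateField.adjoin K {z} := hz ▸ IntermediateField.mem_top
      induction hx using IntermediateField.adjoin_induction with
      | mem y hy => rw [Set.mem_singleton_iff] at hy; subst hy; exact hστ
      | algebraMap y => simp
      | add a b _ _ ha hb => simp [ha, hb]
      | inv a _ ha => simp [ha]
      | mul a b _ _ ha hb => simp [ha, hb]
    have hmonic : ((minpoly K z).map (algebraMap K L)).Monic :=
      (minpoly.monic hint).map _
    have hroots_eq : ((minpoly K z).map (algebraMap K L)).roots =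
        Finset.univ.val.map fun σ : L ≃ₐ[K] L => σ z := by
      have hnd : (Finset.univ.val.map fun σ : L ≃ₐ[K] L => σ z).Nodup :=
        Finset.univ.nodup.map hinj
      refine (Multiset.eq_of_le_of_card_le ?_ ?_).symm
      · apply Multiset.le_iff_count.mpr
        intro a
        by_cases ha : a ∈ Finset.univ.val.map fun σ : L ≃ₐ[K] L => σ z
        · obtain ⟨σ, _, rfl⟩ := Multiset.mem_map.mp ha
          rw [Multiset.count_eq_one_of_mem hnd ha]
          rw [Multiset.one_le_count_iff_mem, mem_roots hmonic.ne_zero]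
          rw [IsRoot, eval_map, ← aeval_def, aeval_algHom_apply, minpoly.aeval, map_zero]
        · rw [Multiset.count_eq_zero_of_notMem ha]
          exact Nat.zero_le _
      · rw [Multiset.card_map, ← Finset.card_def, Finset.card_univ]
        have hcard : Multiset.card ((minpoly K z).map (algebraMap K L)).roots =
            ((minpoly K z).map (algebraMap K L)).natDegree :=
          splits_iff_card_roots.mp hsplits
        rw [hcard, natDegree_map, ← IntermediateField.adjoin.finrank hint, hz,
          IntermediateField.finrank_top', ← h, Nat.card_eq_fintype_card]
    rw [hsplits.eq_prod_roots_of_monic hmonic,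
      hroots_eq, Multiset.map_map, Finset.prod]
    rfl
end

section
/- Let L ⊇ K be a field extension with [L:K] < ∞ and G = Aut(L,K). If K = {y ∈ L : σ(y) = y for all σ ∈ G}, then L is a splitting field over K of a nonzero polynomial f ∈ K[X] that has no multiple roots in L. -/
/-- Let `L/K` be a finite-degree field extension with `G = Aut(L,K)`. If `K` is exactly
the set of elements of `L` fixed by every `σ ∈ G`, then `L` is a splitting field over
`K` of a nonzero polynomial `f ∈ K[X]` with no multiple roots in `L`. -/
theorem splitting_field_of_fixed_field_eq_bot (K L : Type*) [Field K] [Field L]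
    [Algebra K L] [FiniteDimensional K L]
    (h : ∀ y : L, (∀ σ : L ≃ₐ[K] L, σ y = y) → ∃ x : K, algebraMap K L x = y) :
    ∃ f : Polynomial K, f ≠ 0 ∧ (f.map (algebraMap K L)).Splits ∧
      Algebra.adjoin K (f.rootSet L) = ⊤ ∧
      ((f.map (algebraMap K L)).roots).Nodup := by
  have hgal : IsGalois K L := by
    apply IsGalois.of_fixedField_eq_bot
    rw [eq_bot_iff]
    intro y hy
    obtain ⟨x, hx⟩ := h y (fun σ => hy ⟨σ, Subgroup.mem_top σ⟩)
    exact ⟨x, hx⟩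
  obtain ⟨α, hα⟩ := Field.exists_primitive_element K L
  have hint := IsGalois.integral K α
  refine ⟨minpoly K α, minpoly.ne_zero hint, IsGalois.splits K α, ?_, ?_⟩
  · rw [eq_top_iff, ← IntermediateField.top_toSubalgebra, ← hα,
      IntermediateField.adjoin_simple_toSubalgebra_of_isAlgebraic hint.isAlgebraic]
    apply Algebra.adjoin_mono
    rw [Set.singleton_subset_iff, Polynomial.mem_rootSet]
    exact ⟨minpoly.ne_zero hint, minpoly.aeval _ _⟩
  · exact Polynomial.nodup_roots (Polynomial.Separable.map (IsGalois.separable K α))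
end
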